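/- arXiv:2002.01899 — 3 statements merged into one kernel-verified Lean document; each statement's English description precedes it below -/
import Mathlib

section
/- For a C¹ purely vectorial function f = f₁i + f₂j + f₃k : Ω → ℍ(ℂ) on an open set Ω ⊆ ℝ³, the equation ψ^θD[f] = 0 is equivalent to the system: (1) −∂₁f₁ + (∂₂f₂ − ∂₃f₃) sin θ − (∂₂f₃ + ∂₃f₂) cos θ = 0; (2) (∂₃f₃ − ∂₂f₂) cos θ − (∂₂f₃ + ∂₃f₂) sin θ = 0; (3) −∂₁f₃ + ∂₃f₁ sin θ + ∂₂f₁ cos θ = 0; (4) ∂₁f₂ − ∂₃f₁ cos θ + ∂₂f₁ sin θ = 0. -/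
noncomputable section

def iC : Quaternion ℂ := ⟨0, 1, 0, 0⟩
def jC : Quaternion ℂ := ⟨0, 0, 1, 0⟩
def kC : Quaternion ℂ := ⟨0, 0, 0, 1⟩

/-- The quaternion `e^{iθ} = cos θ + (sin θ) i`, viewed in `ℍ(ℂ)`. -/
def eC (θ : ℝ) : Quaternion ℂ := ⟨(Real.cos θ : ℂ), (Real.sin θ : ℂ), 0, 0⟩

/-- The structural set `ψ^θ = {i, i e^{iθ} j, e^{iθ} j}`. -/
def ψC (θ : ℝ) : Fin 3 → Quaternion ℂ := ![iC, iC * eC θ * jC, eC θ * jC]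

/-- Partial derivative `∂ₘ` of a complex-valued function on `ℝ³`. -/
def pd (m : Fin 3) (g : (Fin 3 → ℝ) → ℂ) (x : Fin 3 → ℝ) : ℂ :=
  fderiv ℝ g x (Pi.single m 1)

/-- Componentwise partial derivative `∂ₘ` of an `ℍ(ℂ)`-valued function on `ℝ³`. -/
def qpd (m : Fin 3) (f : (Fin 3 → ℝ) → Quaternion ℂ) (x : Fin 3 → ℝ) : Quaternion ℂ :=
  ⟨pd m (fun y => (f y).re) x, pd m (fun y => (f y).imI) x,
   pd m (fun y => (f y).imJ) x, pd m (fun y => (f y).imK) x⟩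

/-- The left generalized Cauchy–Riemann operator `ψ^θD`. -/
def DL (θ : ℝ) (f : (Fin 3 → ℝ) → Quaternion ℂ) (x : Fin 3 → ℝ) : Quaternion ℂ :=
  ψC θ 0 * qpd 0 f x + ψC θ 1 * qpd 1 f x + ψC θ 2 * qpd 2 f x

/-- The right generalized Cauchy–Riemann operator `Dψ^θ`. -/
def DR (θ : ℝ) (f : (Fin 3 → ℝ) → Quaternion ℂ) (x : Fin 3 → ℝ) : Quaternion ℂ :=
  qpd 0 f x * ψC θ 0 + qpd 1 f x * ψC θ 1 + qpd 2 f x * ψC θ 2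

/-- The generalized Laplacian system (1)–(4) for the vector field `(f₁, f₂, f₃)` at `x`
(here `∂₁ = pd 0`, `∂₂ = pd 1`, `∂₃ = pd 2`). -/
def GLsys (θ : ℝ) (f₁ f₂ f₃ : (Fin 3 → ℝ) → ℂ) (x : Fin 3 → ℝ) : Prop :=
  (-pd 0 f₁ x + (pd 1 f₂ x - pd 2 f₃ x) * (Real.sin θ : ℂ)
      - (pd 1 f₃ x + pd 2 f₂ x) * (Real.cos θ : ℂ) = 0) ∧
  ((pd 2 f₃ x - pd 1 f₂ x) * (Real.cos θ : ℂ)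
      - (pd 1 f₃ x + pd 2 f₂ x) * (Real.sin θ : ℂ) = 0) ∧
  (-pd 0 f₃ x + pd 2 f₁ x * (Real.sin θ : ℂ) + pd 1 f₁ x * (Real.cos θ : ℂ) = 0) ∧
  (pd 0 f₂ x - pd 2 f₁ x * (Real.cos θ : ℂ) + pd 1 f₁ x * (Real.sin θ : ℂ) = 0)

/-- For a `C¹` purely vectorial `f = f₁i + f₂j + f₃k`, `ψ^θD[f] = 0` is equivalent to
the generalized Laplacian system (1)–(4). -/
theorem stmt_12 (θ : ℝ) (Ω : Set (Fin 3 → ℝ)) (hΩ : IsOpen Ω)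
    (f₁ f₂ f₃ : (Fin 3 → ℝ) → ℂ)
    (h1 : ContDiffOn ℝ 1 f₁ Ω) (h2 : ContDiffOn ℝ 1 f₂ Ω) (h3 : ContDiffOn ℝ 1 f₃ Ω) :
    ∀ x ∈ Ω,
      DL θ (fun y => (⟨0, f₁ y, f₂ y, f₃ y⟩ : Quaternion ℂ)) x = 0 ↔
      GLsys θ f₁ f₂ f₃ x := by
  intro x hx
  have hz : pd 0 (fun _ => (0:ℂ)) x = 0 ∧ pd 1 (fun _ => (0:ℂ)) x = 0 ∧
      pd 2 (fun _ => (0:ℂ)) x = 0 := by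
    simp [pd]
  obtain ⟨hz0, hz1, hz2⟩ := hz
  simp only [DL, ψC, GLsys]
  rw [Quaternion.ext_iff]
  simp only [Matrix.cons_val_zero, Matrix.cons_val_one, Matrix.head_cons,
    Matrix.cons_val_two, Matrix.tail_cons,
    Quaternion.re_mul, Quaternion.imI_mul, Quaternion.imJ_mul, Quaternion.imK_mul,
    Quaternion.re_add, Quaternion.imI_add, Quaternion.imJ_add, Quaternion.imK_add,
    Quaternion.re_zero, Quaternion.imI_zero, Quaternion.imJ_zero, Quaternion.imK_zero]
  simp only [qpd, iC, jC, eC]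
  simp only [hz0, hz1, hz2]
  constructor
  · rintro ⟨e1, e2, e3, e4⟩
    refine ⟨?_, ?_, ?_, ?_⟩ <;> [linear_combination e1; linear_combination e2;
      linear_combination e3; linear_combination e4]
  · rintro ⟨e1, e2, e3, e4⟩
    refine ⟨?_, ?_, ?_, ?_⟩ <;> [linear_combination e1; linear_combination e2;
      linear_combination e3; linear_combination e4]
end
end

section
/- For a C¹ purely vectorial function f = f₁i + f₂j + f₃k : Ω → ℍ(ℂ), the right equation Dψ^θ[f] = 0 holds if and only if the left equation ψ^θD[f] = 0 holds; i.e., for vector fields, left- and right-ψ^θ-hyperholomorphicity coincide, both being equivalent to the generalized Laplacian system. -/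
noncomputable section

lemma pd_zero (m : Fin 3) (x : Fin 3 → ℝ) : pd m (fun _ => (0:ℂ)) x = 0 := by
  simp [pd]

lemma qpd_mk (m : Fin 3) (f₁ f₂ f₃ : (Fin 3 → ℝ) → ℂ) (x : Fin 3 → ℝ) :
    qpd m (fun y => (⟨0, f₁ y, f₂ y, f₃ y⟩ : Quaternion ℂ)) x
      = ⟨0, pd m f₁ x, pd m f₂ x, pd m f₃ x⟩ := by
  have h0 : pd m (fun y => ((⟨0, f₁ y, f₂ y, f₃ y⟩ : Quaternion ℂ)).re) x = 0 :=
    pd_zero m x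
  exact QuaternionAlgebra.ext h0 rfl rfl rfl

lemma mk_eq_zero (a b c d : ℂ) :
    (⟨a, b, c, d⟩ : Quaternion ℂ) = 0 ↔ a = 0 ∧ b = 0 ∧ c = 0 ∧ d = 0 := by
  constructor
  · intro h
    exact ⟨congrArg QuaternionAlgebra.re h, congrArg QuaternionAlgebra.imI h,
           congrArg QuaternionAlgebra.imJ h, congrArg QuaternionAlgebra.imK h⟩
  · rintro ⟨h1, h2, h3, h4⟩
    exact QuaternionAlgebra.ext h1 h2 h3 h4

/-- For a `C¹` purely vectorial `f = f₁i + f₂j + f₃k`, the right equation `Dψ^θ[f] = 0`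
holds iff the left equation `ψ^θD[f] = 0` holds, both being equivalent to the
generalized Laplacian system. -/
theorem stmt_13 (θ : ℝ) (Ω : Set (Fin 3 → ℝ)) (hΩ : IsOpen Ω)
    (f₁ f₂ f₃ : (Fin 3 → ℝ) → ℂ)
    (h1 : ContDiffOn ℝ 1 f₁ Ω) (h2 : ContDiffOn ℝ 1 f₂ Ω) (h3 : ContDiffOn ℝ 1 f₃ Ω) :
    ∀ x ∈ Ω,
      (DR θ (fun y => (⟨0, f₁ y, f₂ y, f₃ y⟩ : Quaternion ℂ)) x = 0 ↔
        DL θ (fun y => (⟨0, f₁ y, f₂ y, f₃ y⟩ : Quaternion ℂ)) x = 0) ∧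
      (DL θ (fun y => (⟨0, f₁ y, f₂ y, f₃ y⟩ : Quaternion ℂ)) x = 0 ↔
        GLsys θ f₁ f₂ f₃ x) := by
  intro x _
  have hDL : DL θ (fun y => (⟨0, f₁ y, f₂ y, f₃ y⟩ : Quaternion ℂ)) x
      = ⟨-pd 0 f₁ x + (pd 1 f₂ x - pd 2 f₃ x) * (Real.sin θ : ℂ)
            - (pd 1 f₃ x + pd 2 f₂ x) * (Real.cos θ : ℂ),
         (pd 2 f₃ x - pd 1 f₂ x) * (Real.cos θ : ℂ)
            - (pd 1 f₃ x + pd 2 f₂ x) * (Real.sin θ : ℂ),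
         -pd 0 f₃ x + pd 2 f₁ x * (Real.sin θ : ℂ) + pd 1 f₁ x * (Real.cos θ : ℂ),
         pd 0 f₂ x - pd 2 f₁ x * (Real.cos θ : ℂ) + pd 1 f₁ x * (Real.sin θ : ℂ)⟩ := by
    simp only [DL, ψC]
    simp only [Matrix.cons_val_zero, Matrix.cons_val_one, Matrix.head_cons,
      Matrix.cons_val_two, Matrix.tail_cons]
    ext <;>
      simp [Quaternion.re_mul, Quaternion.imI_mul,
        Quaternion.imJ_mul, Quaternion.imK_mul] <;> simp [qpd_mk, iC, jC, eC] <;> push_cast <;> ring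
  have hDR : DR θ (fun y => (⟨0, f₁ y, f₂ y, f₃ y⟩ : Quaternion ℂ)) x
      = ⟨-pd 0 f₁ x + (pd 1 f₂ x - pd 2 f₃ x) * (Real.sin θ : ℂ)
            - (pd 1 f₃ x + pd 2 f₂ x) * (Real.cos θ : ℂ),
         -((pd 2 f₃ x - pd 1 f₂ x) * (Real.cos θ : ℂ)
            - (pd 1 f₃ x + pd 2 f₂ x) * (Real.sin θ : ℂ)),
         -(-pd 0 f₃ x + pd 2 f₁ x * (Real.sin θ : ℂ) + pd 1 f₁ x * (Real.cos θ : ℂ)),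
         -(pd 0 f₂ x - pd 2 f₁ x * (Real.cos θ : ℂ) + pd 1 f₁ x * (Real.sin θ : ℂ))⟩ := by
    simp only [DR, ψC]
    simp only [Matrix.cons_val_zero, Matrix.cons_val_one, Matrix.head_cons,
      Matrix.cons_val_two, Matrix.tail_cons]
    ext <;>
      simp [Quaternion.re_mul, Quaternion.imI_mul,
        Quaternion.imJ_mul, Quaternion.imK_mul] <;> simp [qpd_mk, iC, jC, eC] <;> push_cast <;> ring
  rw [hDL, hDR]
  erw [mk_eq_zero, mk_eq_zero]
  unfold GLsys
  simp only [neg_eq_zero]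
  exact ⟨trivial, trivial⟩
end
end

section
/- Let f = f₀ + →f be a C¹ function on an open set Ω ⊆ ℝ³ with values in ℍ(ℂ). Then f is both left- and right-ψ^θ-hyperholomorphic in Ω if and only if ψ^θgrad[f₀] ≡ 0 in Ω and →f is a generalized Laplacian vector field in Ω. -/
noncomputable section

lemma qeq0 (q : Quaternion ℂ) : q = 0 ↔ q.re = 0 ∧ q.imI = 0 ∧ q.imJ = 0 ∧ q.imK = 0 := by
  constructor
  · intro h
    simp [h, Quaternion.re_zero, Quaternion.imI_zero, Quaternion.imJ_zero, Quaternion.imK_zero]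
  · rintro ⟨h1, h2, h3, h4⟩; ext <;> simp [h1, h2, h3, h4, Quaternion.re_zero, Quaternion.imI_zero, Quaternion.imJ_zero, Quaternion.imK_zero]

lemma mkre' (a b c d : ℂ) : (⟨a,b,c,d⟩ : Quaternion ℂ).re = a := rfl
lemma mkimI' (a b c d : ℂ) : (⟨a,b,c,d⟩ : Quaternion ℂ).imI = b := rfl
lemma mkimJ' (a b c d : ℂ) : (⟨a,b,c,d⟩ : Quaternion ℂ).imJ = c := rfl
lemma mkimK' (a b c d : ℂ) : (⟨a,b,c,d⟩ : Quaternion ℂ).imK = d := rfl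

lemma key (θ : ℝ) (a0 a1 a2 b0 b1 b2 u0 u1 u2 v0 v1 v2 : ℂ)
    (q0 q1 q2 : Quaternion ℂ) (h0 : q0 = ⟨a0,b0,u0,v0⟩) (h1 : q1 = ⟨a1,b1,u1,v1⟩)
    (h2 : q2 = ⟨a2,b2,u2,v2⟩) :
    (ψC θ 0 * q0 + ψC θ 1 * q1 + ψC θ 2 * q2 = 0 ∧
     q0 * ψC θ 0 + q1 * ψC θ 1 + q2 * ψC θ 2 = 0) ↔
    ((a0 • ψC θ 0 + a1 • ψC θ 1 + a2 • ψC θ 2 = 0) ∧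
     ((-b0 + (u1 - v2) * (Real.sin θ : ℂ) - (v1 + u2) * (Real.cos θ : ℂ) = 0) ∧
      ((v2 - u1) * (Real.cos θ : ℂ) - (v1 + u2) * (Real.sin θ : ℂ) = 0) ∧
      (-v0 + b2 * (Real.sin θ : ℂ) + b1 * (Real.cos θ : ℂ) = 0) ∧
      (u0 - b2 * (Real.cos θ : ℂ) + b1 * (Real.sin θ : ℂ) = 0))) := by
  simp only [ψC, Matrix.cons_val_zero, Matrix.cons_val_one, Matrix.head_cons,
    Matrix.cons_val_two, Matrix.tail_cons, Matrix.cons_val, qeq0,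
    Quaternion.re_mul, Quaternion.imI_mul, Quaternion.imJ_mul, Quaternion.imK_mul,
    Quaternion.re_add, Quaternion.imI_add, Quaternion.imJ_add, Quaternion.imK_add,
    Quaternion.re_smul, Quaternion.imI_smul, Quaternion.imJ_smul, Quaternion.imK_smul, smul_eq_mul]
  subst h0 h1 h2
  simp only [iC, jC, eC, mkre', mkimI', mkimJ', mkimK']
  constructor
  · rintro ⟨⟨L1, L2, L3, L4⟩, R1, R2, R3, R4⟩
    refine ⟨⟨by linear_combination, by linear_combination (L2 + R2) / 2,
            by linear_combination (L3 + R3) / 2, by linear_combination (L4 + R4) / 2⟩,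
           by linear_combination L1, by linear_combination (L2 - R2) / 2,
           by linear_combination (L3 - R3) / 2, by linear_combination (L4 - R4) / 2⟩
  · rintro ⟨⟨E0, E1, E2, E3⟩, G1, G2, G3, G4⟩
    refine ⟨⟨by linear_combination G1, by linear_combination E1 + G2,
            by linear_combination E2 + G3, by linear_combination E3 + G4⟩,
           by linear_combination G1, by linear_combination E1 - G2,
           by linear_combination E2 - G3, by linear_combination E3 - G4⟩

/-- `ψ^θ grad[f₀] = (∂₁f₀)ψ₁ + (∂₂f₀)ψ₂ + (∂₃f₀)ψ₃`. -/
def gradψ (θ : ℝ) (f₀ : (Fin 3 → ℝ) → ℂ) (x : Fin 3 → ℝ) : Quaternion ℂ :=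
  pd 0 f₀ x • ψC θ 0 + pd 1 f₀ x • ψC θ 1 + pd 2 f₀ x • ψC θ 2

/-- A `C¹` function `f = f₀ + →f : Ω → ℍ(ℂ)` is both left- and right-`ψ^θ`-hyperholomorphic
in `Ω` iff `ψ^θgrad[f₀] ≡ 0` in `Ω` and `→f` is a generalized Laplacian vector field in `Ω`. -/
theorem stmt_14 (θ : ℝ) (Ω : Set (Fin 3 → ℝ)) (hΩ : IsOpen Ω)
    (f : (Fin 3 → ℝ) → Quaternion ℂ)
    (hre : ContDiffOn ℝ 1 (fun y => (f y).re) Ω)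
    (himI : ContDiffOn ℝ 1 (fun y => (f y).imI) Ω)
    (himJ : ContDiffOn ℝ 1 (fun y => (f y).imJ) Ω)
    (himK : ContDiffOn ℝ 1 (fun y => (f y).imK) Ω) :
    (∀ x ∈ Ω, DL θ f x = 0 ∧ DR θ f x = 0) ↔
    ((∀ x ∈ Ω, gradψ θ (fun y => (f y).re) x = 0) ∧
      (∀ x ∈ Ω, GLsys θ (fun y => (f y).imI) (fun y => (f y).imJ) (fun y => (f y).imK) x)) := by

  have h : ∀ x : Fin 3 → ℝ, (DL θ f x = 0 ∧ DR θ f x = 0) ↔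
      (gradψ θ (fun y => (f y).re) x = 0 ∧
        GLsys θ (fun y => (f y).imI) (fun y => (f y).imJ) (fun y => (f y).imK) x) := by
    intro x
    exact key θ (pd 0 (fun y => (f y).re) x) (pd 1 (fun y => (f y).re) x)
      (pd 2 (fun y => (f y).re) x) (pd 0 (fun y => (f y).imI) x) (pd 1 (fun y => (f y).imI) x)
      (pd 2 (fun y => (f y).imI) x) (pd 0 (fun y => (f y).imJ) x) (pd 1 (fun y => (f y).imJ) x)
      (pd 2 (fun y => (f y).imJ) x) (pd 0 (fun y => (f y).imK) x) (pd 1 (fun y => (f y).imK) x)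
      (pd 2 (fun y => (f y).imK) x) (qpd 0 f x) (qpd 1 f x) (qpd 2 f x) rfl rfl rfl
  constructor
  · intro H
    exact ⟨fun x hx => ((h x).1 (H x hx)).1, fun x hx => ((h x).1 (H x hx)).2⟩
  · rintro ⟨H1, H2⟩ x hx
    exact (h x).2 ⟨H1 x hx, H2 x hx⟩
end
end
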